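/- arXiv:1405.3721 — 2 statements merged into one kernel-verified Lean document; each statement's English description precedes it below -/
import Mathlib

section
/- Let P be a nonzero form of degree d over ℂ with rk(P) = t, and let P = H_1^d + ⋯ + H_t^d be a minimal Waring decomposition. Then at most d of the projective points [H_1],…,[H_t] lie on a line; equivalently, no 2-dimensional linear subspace of the space of linear forms contains d + 1 pairwise non-proportional forms among H_1,…,H_t. -/
open Polynomial Finset

namespace Stmt13Aux

/-- The pairing functional `p ↦ ∑_{k ≤ d} g k * p.coeff k`, as a linear map. -/
noncomputable def phi (d : ℕ) (g : ℕ → ℂ) : Polynomial ℂ →ₗ[ℂ] ℂ where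
  toFun p := ∑ k ∈ range (d + 1), g k * p.coeff k
  map_add' p q := by simp [coeff_add, mul_add, Finset.sum_add_distrib]
  map_smul' c p := by
    simp only [coeff_smul, smul_eq_mul, RingHom.id_apply, Finset.mul_sum]
    exact Finset.sum_congr rfl fun k _ => by ring

lemma phi_apply (d : ℕ) (g : ℕ → ℂ) (p : Polynomial ℂ) :
    phi d g p = ∑ k ∈ range (d + 1), g k * p.coeff k := rfl

lemma phi_C (d : ℕ) (g : ℕ → ℂ) (τ : ℂ) : phi d g (C τ) = g 0 * τ := by
  rw [phi_apply]
  rw [Finset.sum_eq_single 0]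
  · simp
  · intro k hk hk0; simp [coeff_C, hk0]
  · simp

lemma phi_X_pow (d : ℕ) (g : ℕ → ℂ) (k : ℕ) (hk : k ≤ d) : phi d g (X ^ k) = g k := by
  rw [phi_apply, Finset.sum_eq_single k]
  · simp
  · intro j hj hjk
    rw [coeff_X_pow, if_neg hjk, mul_zero]
  · intro h; exact absurd (Finset.mem_range.2 (by omega)) h

/-- The polynomial (in `b`) equal to `phi d g ((X - C b)^d)`. -/
noncomputable def theta (d : ℕ) (g : ℕ → ℂ) : Polynomial ℂ :=
  ∑ k ∈ range (d + 1), C (g k * (d.choose k : ℂ) * (-1) ^ (d - k)) * X ^ (d - k)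

lemma theta_eval (d : ℕ) (g : ℕ → ℂ) (b : ℂ) :
    (theta d g).eval b = phi d g ((X - C b) ^ d) := by
  rw [theta, phi_apply]
  rw [eval_finset_sum]
  refine Finset.sum_congr rfl fun k hk => ?_
  have : (X - C b) ^ d = (X + C (-b)) ^ d := by rw [map_neg]; ring_nf
  rw [this, coeff_X_add_C_pow]
  simp [mul_pow]
  ring

lemma coeff_sumCXpow (d : ℕ) (a : ℕ → ℂ) (k : ℕ) (hk : k ≤ d) :
    (∑ j ∈ range (d + 1), C (a j) * X ^ (d - j)).coeff (d - k) = a k := by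
  rw [finset_sum_coeff]
  rw [Finset.sum_eq_single k]
  · simp
  · intro j hj hjk
    simp only [coeff_C_mul, coeff_X_pow]
    have h2 : d - k ≠ d - j := by simp at hj; omega
    simp [h2]
  · intro h; exact absurd (Finset.mem_range.2 (by omega)) h

lemma theta_ne_zero (d : ℕ) (g : ℕ → ℂ) (k : ℕ) (hk : k ≤ d) (hg : g k ≠ 0) :
    theta d g ≠ 0 := by
  intro h
  have := coeff_sumCXpow d (fun j => g j * (d.choose j : ℂ) * (-1) ^ (d - j)) k hk
  rw [← theta, h] at this
  simp only [coeff_zero] at this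
  replace this := this.symm
  have hch : (d.choose k : ℂ) ≠ 0 := by
    exact_mod_cast Nat.pos_iff_ne_zero.mp (Nat.choose_pos hk)
  have h1 : ((-1 : ℂ)) ^ (d - k) ≠ 0 := by
    apply pow_ne_zero; norm_num
  rcases mul_eq_zero.mp this with h2 | h2
  · rcases mul_eq_zero.mp h2 with h3 | h3
    · exact hg h3
    · exact hch h3
  · exact h1 h2

lemma exists_eval_ne_zero {p : Polynomial ℂ} (hp : p ≠ 0) : ∃ b : ℂ, p.eval b ≠ 0 := by
  by_contra h
  push_neg at h
  exact hp (Polynomial.zero_of_eval_zero p h)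


lemma natDegree_prod_X_sub_C {n : ℕ} (lam : Fin n → ℂ) :
    (∏ i, (X - C (lam i))).natDegree = n := by
  rw [Polynomial.natDegree_prod]
  · simp
  · intro i _; exact X_sub_C_ne_zero (lam i)

lemma monic_prod_X_sub_C {n : ℕ} (lam : Fin n → ℂ) :
    (∏ i, (X - C (lam i))).Monic :=
  monic_prod_of_monic _ _ fun i _ => monic_X_sub_C (lam i)

lemma coeff_prod_X_sub_C_of_gt {n : ℕ} (lam : Fin n → ℂ) {m : ℕ} (hm : n < m) :
    (∏ i, (X - C (lam i))).coeff m = 0 :=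
  coeff_eq_zero_of_natDegree_lt (by rw [natDegree_prod_X_sub_C]; exact hm)

lemma natDegree_prod_one_sub_le {n : ℕ} (a : Fin n → ℂ) :
    (∏ i, (1 - C (a i) * X)).natDegree ≤ n := by
  refine le_trans (natDegree_prod_le _ _) ?_
  have : ∀ i : Fin n, (1 - C (a i) * X).natDegree ≤ 1 := by
    intro i
    refine le_trans (natDegree_sub_le _ _) (max_le ?_ ?_)
    · simp
    · exact le_trans (natDegree_C_mul_le _ _) (by simp)
  have h2 : ∑ i : Fin n, (1 - C (a i) * X).natDegree ≤ ∑ _i : Fin n, (1 : ℕ) :=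
    Finset.sum_le_sum fun i _ => this i
  simpa using h2

/-- Mirror: coefficients of `∏ (1 - aᵢ X)` are the reversed coefficients of `∏ (X - aᵢ)`. -/
lemma mirror_coeff : ∀ (n : ℕ) (a : Fin n → ℂ) (j : ℕ), j ≤ n →
    (∏ i, (1 - C (a i) * X)).coeff j = (∏ i, (X - C (a i))).coeff (n - j) := by
  intro n
  induction n with
  | zero => intro a j hj; interval_cases j; simp
  | succ n ih =>
    intro a j hj
    set a' : Fin n → ℂ := fun i => a i.castSucc with ha'
    have hq := natDegree_prod_one_sub_le a'
    have IH := ih a'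
    rw [Fin.prod_univ_castSucc (fun i => 1 - C (a i) * X),
        Fin.prod_univ_castSucc (fun i => X - C (a i))]
    set Q := ∏ i : Fin n, (1 - C (a' i) * X) with hQ
    set P := ∏ i : Fin n, (X - C (a' i)) with hP
    set c := a (Fin.last n) with hc
    have hL : ∀ m : ℕ, (Q * (1 - C c * X)).coeff m
        = Q.coeff m - c * (Q * X).coeff m := by
      intro m
      have : Q * (1 - C c * X) = Q - C c * (Q * X) := by ring
      rw [this, coeff_sub, coeff_C_mul]
    have hR : ∀ m : ℕ, (P * (X - C c)).coeff m
        = (P * X).coeff m - c * P.coeff m := by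
      intro m
      have : P * (X - C c) = P * X - C c * P := by ring
      rw [this, coeff_sub, coeff_C_mul]
    rw [hL j, hR (n + 1 - j)]
    rcases Nat.eq_zero_or_pos j with rfl | hjpos
    · simp only [Nat.sub_zero]
      rw [coeff_mul_X_zero, coeff_mul_X]
      have hPn1 : P.coeff (n + 1) = 0 := coeff_prod_X_sub_C_of_gt a' (by omega)
      rw [hPn1, IH 0 (by omega)]
      simp
    · rcases Nat.lt_or_ge j (n + 1) with hjn | hjn
      · -- 1 ≤ j ≤ n
        have h1 : n + 1 - j = (n - j) + 1 := by omega
        have h2 : j = (j - 1) + 1 := by omega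
        rw [h1, coeff_mul_X]
        rw [IH j (by omega)]
        rw [h2, coeff_mul_X, ← h2]
        rw [IH (j - 1) (by omega)]
        have h3 : n - (j - 1) = n - j + 1 := by omega
        rw [h3]
      · -- j = n + 1
        have hj1 : j = n + 1 := by omega
        subst hj1
        have hQ1 : Q.coeff (n + 1) = 0 :=
          coeff_eq_zero_of_natDegree_lt (by omega)
        have h2 : (n + 1 : ℕ) - (n + 1) = 0 := by omega
        rw [h2, coeff_mul_X_zero, hQ1]
        rw [show (n+1) = n + 1 from rfl, coeff_mul_X]
        rw [IH n (le_refl n)]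
        simp

lemma sub_lemma (d : ℕ) (hd : 0 < d) (h : ℕ → ℂ) (h0 : h 0 ≠ 0)
    (hk1 : ∃ k, 1 ≤ k ∧ k ≤ d ∧ h k ≠ 0) :
    ∃ lam : Fin d → ℂ, Function.Injective lam ∧ (∀ i, lam i ≠ 0) ∧
      phi d h (∏ i, (X - C (lam i))) = 0 := by
  obtain ⟨k₁, hk₁1, hk₁d, hk₁⟩ := hk1
  have hΘ : theta d h ≠ 0 := theta_ne_zero d h k₁ hk₁d hk₁
  set Θ₂ : Polynomial ℂ := C (h 0 * (-1)^d) * X^d - theta d h with hT2def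
  have hΘ₂ : Θ₂ ≠ 0 := by
    intro hz
    have hco : Θ₂.coeff (d - k₁) = - (h k₁ * (d.choose k₁ : ℂ) * (-1)^(d-k₁)) := by
      rw [hT2def, coeff_sub, coeff_C_mul, coeff_X_pow]
      have hne : ¬ (d - k₁ = d) := by omega
      rw [if_neg hne, mul_zero, zero_sub]
      congr 1
      exact coeff_sumCXpow d (fun j => h j * (d.choose j : ℂ) * (-1)^(d - j)) k₁ hk₁d
    rw [hz, coeff_zero] at hco
    have hch : (d.choose k₁ : ℂ) ≠ 0 := by
      exact_mod_cast Nat.pos_iff_ne_zero.mp (Nat.choose_pos hk₁d)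
    have h1 : ((-1 : ℂ)) ^ (d - k₁) ≠ 0 := by apply pow_ne_zero; norm_num
    exact (mul_ne_zero (mul_ne_zero hk₁ hch) h1) (by
      have := hco.symm
      simpa [neg_eq_zero] using this)
  obtain ⟨b, hb⟩ := exists_eval_ne_zero (mul_ne_zero hΘ hΘ₂)
  rw [eval_mul] at hb
  have hb1 : (theta d h).eval b ≠ 0 := fun h' => hb (by rw [h', zero_mul])
  have hb2 : Θ₂.eval b ≠ 0 := fun h' => hb (by rw [h', mul_zero])
  set τ : ℂ := (theta d h).eval b / h 0 with hτdef
  have hτ : τ ≠ 0 := div_ne_zero hb1 h0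
  obtain ⟨ω, hω⟩ := IsAlgClosed.exists_pow_nat_eq τ hd
  have hωne : ω ≠ 0 := by
    intro h'
    apply hτ; rw [← hω, h']
    exact zero_pow hd.ne'
  set ζ : ℂ := Complex.exp (2 * Real.pi * Complex.I / d) with hζdef
  have hζ : IsPrimitiveRoot ζ d := Complex.isPrimitiveRoot_exp d hd.ne'
  set lam : Fin d → ℂ := fun i => b + ζ^(i:ℕ) * ω with hlam
  have hinj : Function.Injective lam := by
    intro i j hij
    simp only [hlam, add_right_inj] at hij
    have hij2 : ζ^(i:ℕ) = ζ^(j:ℕ) := mul_right_cancel₀ hωne hij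
    exact Fin.ext (hζ.pow_inj i.isLt j.isLt hij2)
  have hprodid : ∏ i, (X - C (lam i)) = (X - C b)^d - C τ := by
    have e1 : (X:ℂ[X])^d - C τ = ∏ i ∈ range d, (X - C (ζ^i * ω)) :=
      X_pow_sub_C_eq_prod hζ hd hω
    calc ∏ i : Fin d, (X - C (lam i))
        = ∏ i ∈ range d, (X - C (b + ζ^i * ω)) :=
          Fin.prod_univ_eq_prod_range (fun i => X - C (b + ζ^i * ω)) d
      _ = ∏ i ∈ range d, ((X - C (ζ^i * ω)).comp (X - C b)) := by
          refine Finset.prod_congr rfl fun i _ => ?_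
          rw [sub_comp, X_comp, C_comp, map_add]
          ring
      _ = ((X^d - C τ).comp (X - C b)) := by rw [e1, Polynomial.prod_comp]
      _ = (X - C b)^d - C τ := by rw [sub_comp, pow_comp, X_comp, C_comp]
  have hphi : phi d h (∏ i, (X - C (lam i))) = 0 := by
    rw [hprodid, map_sub, phi_C, ← theta_eval, hτdef]
    field_simp
    ring
  have heval0 : (∏ i, (X - C (lam i))).eval 0 ≠ 0 := by
    rw [hprodid]
    have he : ((X - C b)^d - C τ).eval 0 = (-b)^d - τ := by simp
    rw [he]
    intro hz
    apply hb2
    have hTb : Θ₂.eval b = h 0 * ((-b)^d - τ) := by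
      rw [hT2def]
      simp only [eval_sub, eval_mul, eval_pow, eval_C, eval_X]
      rw [hτdef]
      field_simp
      ring
    rw [hTb, hz, mul_zero]
  refine ⟨lam, hinj, fun i hz => heval0 ?_, hphi⟩
  rw [eval_prod]
  apply Finset.prod_eq_zero (Finset.mem_univ i)
  simp [hz]


lemma star_lemma (d : ℕ) (hd : 0 < d) (g : ℕ → ℂ) (k₀ : ℕ) (hk₀ : k₀ < d) (hg : g k₀ ≠ 0) :
    ∃ lam : Fin d → ℂ, Function.Injective lam ∧ phi d g (∏ i, (X - C (lam i))) = 0 := by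
  have hΘ : theta d g ≠ 0 := theta_ne_zero d g k₀ (le_of_lt hk₀) hg
  obtain ⟨c, hc⟩ := exists_eval_ne_zero hΘ
  set h : ℕ → ℂ := fun k => phi d g ((X - C c) ^ (d - k)) with hh
  have h0 : h 0 ≠ 0 := by
    rw [hh]
    simp only [Nat.sub_zero]
    rw [← theta_eval]
    exact hc
  have hk1 : ∃ k, 1 ≤ k ∧ k ≤ d ∧ h k ≠ 0 := by
    by_contra hcon
    push_neg at hcon
    have hvan : ∀ j, j < d → phi d g ((X - C c) ^ j) = 0 := by
      intro j hj
      have h2 := hcon (d - j) (by omega) (by omega)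
      rw [hh] at h2
      simpa [show d - (d - j) = j by omega] using h2
    apply hg
    have hXk : (X : ℂ[X]) ^ k₀
        = ∑ j ∈ range (k₀ + 1), (c ^ (k₀ - j) * (k₀.choose j : ℂ)) • (X - C c) ^ j := by
      have hb := add_pow (X - C c) (C c) k₀
      rw [sub_add_cancel] at hb
      rw [hb]
      refine Finset.sum_congr rfl fun j _ => ?_
      rw [smul_eq_C_mul, C_mul, ← C_pow, C_eq_natCast]
      ring
    have : g k₀ = phi d g ((X : ℂ[X]) ^ k₀) := (phi_X_pow d g k₀ (le_of_lt hk₀)).symm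
    rw [this, hXk, map_sum]
    refine Finset.sum_eq_zero fun j hj => ?_
    rw [map_smul, hvan j (by simp at hj; omega), smul_zero]
  obtain ⟨lamt, hinjt, hne0, hphih⟩ := sub_lemma d hd h h0 hk1
  set lam : Fin d → ℂ := fun i => c + (lamt i)⁻¹ with hlam
  have hinj2 : Function.Injective lam := by
    intro i j hij
    simp only [hlam, add_right_inj] at hij
    exact hinjt (inv_injective hij)
  set pt := ∏ i, (X - C (lamt i)) with hpt
  set q' := ∏ i, ((1 : ℂ[X]) - C (lamt i) * X) with hq'
  set γ : ℂ := ∏ i, (-(lamt i)⁻¹) with hγ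
  have hfactor : ∀ i : Fin d, (X - C ((lamt i)⁻¹))
      = C (-(lamt i)⁻¹) * (1 - C (lamt i) * X) := by
    intro i
    have he : C (-(lamt i)⁻¹) * (1 - C (lamt i) * X)
        = C (-(lamt i)⁻¹) - C ((-(lamt i)⁻¹) * (lamt i)) * X := by
      rw [C_mul]; ring
    rw [he]
    have h2 : (-(lamt i)⁻¹) * (lamt i) = -1 := by
      rw [neg_mul, inv_mul_cancel₀ (hne0 i)]
    rw [h2]
    simp only [map_neg, map_one]
    ring
  have hq'fact : ∏ i, (X - C ((lamt i)⁻¹)) = C γ * q' := by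
    calc ∏ i, (X - C ((lamt i)⁻¹))
        = ∏ i, (C (-(lamt i)⁻¹) * (1 - C (lamt i) * X)) :=
          Finset.prod_congr rfl fun i _ => hfactor i
      _ = (∏ i, C (-(lamt i)⁻¹)) * ∏ i, ((1 : ℂ[X]) - C (lamt i) * X) :=
          Finset.prod_mul_distrib
      _ = C γ * q' := by rw [hγ, hq', map_prod]
  have hcomp : ∏ i, (X - C (lam i)) = (C γ * q').comp (X - C c) := by
    rw [← hq'fact, Polynomial.prod_comp]
    refine Finset.prod_congr rfl fun i _ => ?_
    rw [sub_comp, X_comp, C_comp, hlam]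
    rw [map_add]
    ring
  have hdegq' : q'.natDegree < d + 1 := Nat.lt_succ_of_le (natDegree_prod_one_sub_le lamt)
  have hkey : phi d g ((C γ * q').comp (X - C c))
      = γ * ∑ j ∈ range (d + 1), q'.coeff j * h (d - j) := by
    rw [mul_comp, C_comp]
    have hq'sum : q'.comp (X - C c)
        = ∑ j ∈ range (d + 1), C (q'.coeff j) * (X - C c) ^ j := by
      conv_lhs => rw [as_sum_range' q' (d + 1) hdegq']
      rw [Polynomial.sum_comp]
      refine Finset.sum_congr rfl fun j _ => ?_
      rw [← C_mul_X_pow_eq_monomial, mul_comp, C_comp, pow_comp, X_comp]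
    rw [hq'sum, Finset.mul_sum, map_sum]
    rw [Finset.mul_sum]
    refine Finset.sum_congr rfl fun j hj => ?_
    have hjd : j ≤ d := by simp at hj; omega
    have : C γ * (C (q'.coeff j) * (X - C c) ^ j)
        = (γ * q'.coeff j) • ((X - C c) ^ j) := by
      rw [smul_eq_C_mul, C_mul]; ring
    rw [this, map_smul]
    have hdj : d - (d - j) = j := by omega
    have hhj : h (d - j) = phi d g ((X - C c) ^ j) := by
      show phi d g ((X - C c) ^ (d - (d - j))) = _
      rw [hdj]
    rw [hhj]
    simp [smul_eq_mul]
    ring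
  have hsum : ∑ j ∈ range (d + 1), q'.coeff j * h (d - j)
      = ∑ k ∈ range (d + 1), pt.coeff k * h k := by
    have hrefl := Finset.sum_range_reflect (fun j => q'.coeff j * h (d - j)) (d + 1)
    rw [← hrefl]
    refine Finset.sum_congr rfl fun j hj => ?_
    have hjd : j ≤ d := by simp at hj; omega
    have h1 : d + 1 - 1 - j = d - j := by omega
    rw [h1, mirror_coeff d lamt (d - j) (by omega)]
    have h2 : d - (d - j) = j := by omega
    rw [h2]
  refine ⟨lam, hinj2, ?_⟩
  rw [hcomp, hkey, hsum]
  have : ∑ k ∈ range (d + 1), pt.coeff k * h k = phi d h pt := by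
    rw [phi_apply]
    exact Finset.sum_congr rfl fun k _ => mul_comm _ _
  rw [this, hphih, mul_zero]


lemma vand_lemma (d : ℕ) (g : ℕ → ℂ) (lam : Fin d → ℂ) (hinj : Function.Injective lam)
    (hphi : phi d g (∏ i, (X - C (lam i))) = 0) :
    ∃ c : Fin d → ℂ, ∀ k ≤ d, g k = ∑ i, c i * lam i ^ k := by
  set p := ∏ i, (X - C (lam i)) with hp
  have hdeg : p.natDegree = d := natDegree_prod_X_sub_C lam
  have hmonic := monic_prod_X_sub_C lam
  have hcd : p.coeff d = 1 := by rw [← hdeg]; exact hmonic.coeff_natDegree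
  set M : Matrix (Fin d) (Fin d) ℂ := Matrix.of (fun k i => lam i ^ (k : ℕ)) with hM
  have hdet : M.det ≠ 0 := by
    have hMt : M.transpose = Matrix.vandermonde lam := by
      ext i k
      simp [hM, Matrix.vandermonde]
    rw [← Matrix.det_transpose, hMt, Matrix.det_vandermonde]
    refine Finset.prod_ne_zero_iff.2 fun i _ => Finset.prod_ne_zero_iff.2 fun j hj => ?_
    have hij : i ≠ j := by
      intro hcontr
      subst hcontr
      exact absurd (Finset.mem_Ioi.mp hj) (lt_irrefl i)
    exact sub_ne_zero_of_ne fun hc => hij (hinj hc.symm)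
  set w : Fin d → ℂ := fun k => g (k : ℕ) with hw
  set cvec := M⁻¹.mulVec w with hcvec
  have hMc : M.mulVec cvec = w := by
    rw [hcvec, Matrix.mulVec_mulVec, Matrix.mul_nonsing_inv _ (Ne.isUnit hdet),
      Matrix.one_mulVec]
  have hk_lt : ∀ k : Fin d, g (k : ℕ) = ∑ i, cvec i * lam i ^ (k : ℕ) := by
    intro k
    have h1 := congrFun hMc k
    rw [Matrix.mulVec] at h1
    have h2 : w k = g (k : ℕ) := rfl
    rw [h2] at h1
    rw [← h1]
    simp only [dotProduct, hM, Matrix.of_apply]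
    exact Finset.sum_congr rfl fun i _ => mul_comm _ _
  have hroot : ∀ i, ∑ k ∈ range (d + 1), p.coeff k * lam i ^ k = 0 := by
    intro i
    have hev : p.eval (lam i) = 0 := by
      rw [hp, eval_prod]
      apply Finset.prod_eq_zero (Finset.mem_univ i)
      simp
    rw [eval_eq_sum_range' (show p.natDegree < d + 1 by omega)] at hev
    exact hev
  have hsplit : ∀ i, ∑ k ∈ range d, p.coeff k * lam i ^ k = - lam i ^ d := by
    intro i
    have h2 := hroot i
    rw [Finset.sum_range_succ, hcd, one_mul] at h2
    linear_combination h2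
  have hphi2 : ∑ k ∈ range d, g k * p.coeff k + g d = 0 := by
    rw [phi_apply, Finset.sum_range_succ, hcd, mul_one] at hphi
    exact hphi
  have hgd : g d = ∑ i, cvec i * lam i ^ d := by
    have h1 : ∑ k ∈ range d, g k * p.coeff k
        = ∑ k ∈ range d, (∑ i, cvec i * lam i ^ k) * p.coeff k := by
      refine Finset.sum_congr rfl fun k hk => ?_
      have hk' : k < d := Finset.mem_range.mp hk
      have := hk_lt ⟨k, hk'⟩
      simp only [Fin.val_mk] at this
      rw [this]
    have h2 : ∑ k ∈ range d, (∑ i, cvec i * lam i ^ k) * p.coeff k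
        = ∑ i, cvec i * (∑ k ∈ range d, p.coeff k * lam i ^ k) := by
      simp_rw [Finset.sum_mul, Finset.mul_sum]
      rw [Finset.sum_comm]
      refine Finset.sum_congr rfl fun i _ => Finset.sum_congr rfl fun k _ => by ring
    have h3 : ∑ i, cvec i * (∑ k ∈ range d, p.coeff k * lam i ^ k)
        = - ∑ i, cvec i * lam i ^ d := by
      rw [← Finset.sum_neg_distrib]
      refine Finset.sum_congr rfl fun i _ => ?_
      rw [hsplit i]
      ring
    have := hphi2
    rw [h1, h2, h3] at this
    linear_combination this
  refine ⟨cvec, fun k hk => ?_⟩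
  rcases Nat.lt_or_ge k d with hlt | hge
  · have := hk_lt ⟨k, hlt⟩
    simpa using this
  · have hkd : k = d := by omega
    subst hkd
    exact hgd


lemma core (d : ℕ) (hd : 0 < d) (f : ℕ → ℂ) :
    ∃ α β : Fin d → ℂ, ∀ k ≤ d, f k = ∑ m, (d.choose k : ℂ) * α m ^ k * β m ^ (d - k) := by
  by_cases hA : ∀ k < d, f k = 0
  · obtain ⟨w, hw⟩ := IsAlgClosed.exists_pow_nat_eq (f d) hd
    set i0 : Fin d := ⟨0, hd⟩ with hi0
    refine ⟨fun m => if m = i0 then w else 0, fun _ => 0, fun k hk => ?_⟩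
    rcases Nat.lt_or_ge k d with hlt | hge
    · rw [hA k hlt]
      symm
      refine Finset.sum_eq_zero fun m _ => ?_
      have hz : (0 : ℂ) ^ (d - k) = 0 := zero_pow (by omega)
      rw [hz, mul_zero]
    · have hkd : k = d := by omega
      subst hkd
      rw [Finset.sum_eq_single i0]
      · simp [hw]
      · intro m _ hm
        simp [hm, zero_pow hd.ne']
      · intro hcon
        exact absurd (Finset.mem_univ i0) hcon
  · push_neg at hA
    obtain ⟨k₀, hk₀d, hk₀⟩ := hA
    set g : ℕ → ℂ := fun k => f k / (d.choose k : ℂ) with hg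
    have hgk₀ : g k₀ ≠ 0 := by
      apply div_ne_zero hk₀
      exact_mod_cast Nat.pos_iff_ne_zero.mp (Nat.choose_pos (le_of_lt hk₀d))
    obtain ⟨lam, hinj, hphi⟩ := star_lemma d hd g k₀ hk₀d hgk₀
    obtain ⟨cv, hcv⟩ := vand_lemma d g lam hinj hphi
    have hroots : ∀ i : Fin d, ∃ μ : ℂ, μ ^ d = cv i :=
      fun i => IsAlgClosed.exists_pow_nat_eq (cv i) hd
    choose μ hμ using hroots
    refine ⟨fun i => μ i * lam i, μ, fun k hk => ?_⟩
    have hch : (d.choose k : ℂ) ≠ 0 := by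
      exact_mod_cast Nat.pos_iff_ne_zero.mp (Nat.choose_pos hk)
    have h1 : f k = (d.choose k : ℂ) * g k := by
      rw [hg]
      field_simp
    rw [h1, hcv k hk, Finset.mul_sum]
    refine Finset.sum_congr rfl fun i _ => ?_
    rw [← hμ i, mul_pow]
    have h2 : μ i ^ d = μ i ^ k * μ i ^ (d - k) := by
      rw [← pow_add]
      congr 1
      omega
    rw [h2]
    ring


open MvPolynomial in
lemma exp_pow {N : ℕ} (d : ℕ) (u v : MvPolynomial (Fin N) ℂ) (a b : ℂ) :
    (a • u + b • v) ^ d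
      = ∑ k ∈ range (d + 1),
          ((d.choose k : ℂ) * a ^ k * b ^ (d - k)) • (u ^ k * v ^ (d - k)) := by
  simp only [MvPolynomial.smul_eq_C_mul]
  rw [add_pow]
  refine Finset.sum_congr rfl fun k hk => ?_
  rw [MvPolynomial.C_mul, MvPolynomial.C_mul, MvPolynomial.C_pow, MvPolynomial.C_pow,
    map_natCast]
  rw [mul_pow, mul_pow]
  ring

open MvPolynomial in
lemma binary_sum {N : ℕ} (d : ℕ) (hd : 0 < d) (u v : MvPolynomial (Fin N) ℂ)
    {ι : Type*} (s : Finset ι) (a b : ι → ℂ) :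
    ∃ α β : Fin d → ℂ,
      ∑ i ∈ s, (a i • u + b i • v) ^ d = ∑ m, (α m • u + β m • v) ^ d := by
  set f : ℕ → ℂ := fun k => ∑ i ∈ s, (d.choose k : ℂ) * a i ^ k * b i ^ (d - k) with hf
  obtain ⟨α, β, hab⟩ := core d hd f
  refine ⟨α, β, ?_⟩
  have h1 : ∑ i ∈ s, (a i • u + b i • v) ^ d
      = ∑ k ∈ range (d + 1), f k • (u ^ k * v ^ (d - k)) := by
    calc ∑ i ∈ s, (a i • u + b i • v) ^ d
        = ∑ i ∈ s, ∑ k ∈ range (d + 1),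
            ((d.choose k : ℂ) * a i ^ k * b i ^ (d - k)) • (u ^ k * v ^ (d - k)) :=
          Finset.sum_congr rfl fun i _ => exp_pow d u v (a i) (b i)
      _ = ∑ k ∈ range (d + 1), ∑ i ∈ s,
            ((d.choose k : ℂ) * a i ^ k * b i ^ (d - k)) • (u ^ k * v ^ (d - k)) :=
          Finset.sum_comm
      _ = ∑ k ∈ range (d + 1), f k • (u ^ k * v ^ (d - k)) := by
          refine Finset.sum_congr rfl fun k _ => ?_
          rw [hf, ← Finset.sum_smul]
  have h2 : ∑ m : Fin d, (α m • u + β m • v) ^ d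
      = ∑ k ∈ range (d + 1), f k • (u ^ k * v ^ (d - k)) := by
    calc ∑ m : Fin d, (α m • u + β m • v) ^ d
        = ∑ m : Fin d, ∑ k ∈ range (d + 1),
            ((d.choose k : ℂ) * α m ^ k * β m ^ (d - k)) • (u ^ k * v ^ (d - k)) :=
          Finset.sum_congr rfl fun m _ => exp_pow d u v (α m) (β m)
      _ = ∑ k ∈ range (d + 1), ∑ m : Fin d,
            ((d.choose k : ℂ) * α m ^ k * β m ^ (d - k)) • (u ^ k * v ^ (d - k)) :=
          Finset.sum_comm
      _ = ∑ k ∈ range (d + 1), f k • (u ^ k * v ^ (d - k)) := by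
          refine Finset.sum_congr rfl fun k hk => ?_
          rw [← Finset.sum_smul, hab k (by simp at hk; omega)]
  rw [h1, h2]

open MvPolynomial in
lemma hom_comb {N : ℕ} {u v : MvPolynomial (Fin N) ℂ}
    (hu : u.IsHomogeneous 1) (hv : v.IsHomogeneous 1) (a b : ℂ) :
    (a • u + b • v).IsHomogeneous 1 := by
  rw [MvPolynomial.smul_eq_C_mul, MvPolynomial.smul_eq_C_mul]
  exact (hu.C_mul a).add (hv.C_mul b)


end Stmt13Aux

open MvPolynomial

/-- The Waring rank of a form `P` of degree `d`: the least `r` such that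
`P = L₁^d + ⋯ + L_r^d` for some linear forms `L i`. -/
noncomputable def waringRank {σ : Type*} (d : ℕ) (P : MvPolynomial σ ℂ) : ℕ :=
  sInf {r : ℕ | ∃ L : Fin r → MvPolynomial σ ℂ,
    (∀ i, (L i).IsHomogeneous 1) ∧ P = ∑ i, (L i) ^ d}

/-- In a minimal Waring decomposition, no 2-dimensional space of linear forms contains
more than `d` pairwise non-proportional of the summands. -/
theorem stmt13 (N d t : ℕ) (hd : 0 < d)
    (P : MvPolynomial (Fin N) ℂ) (hP0 : P ≠ 0) (hP : P.IsHomogeneous d)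
    (ht : waringRank d P = t)
    (H : Fin t → MvPolynomial (Fin N) ℂ) (hH1 : ∀ i, (H i).IsHomogeneous 1)
    (hdec : P = ∑ i, (H i) ^ d) :
    ∀ S : Finset (Fin t),
      (∀ i ∈ S, ∀ j ∈ S, i ≠ j → ¬ ∃ c : ℂ, H i = c • H j) →
      (∃ W : Submodule ℂ (MvPolynomial (Fin N) ℂ),
        Module.finrank ℂ W = 2 ∧ ∀ i ∈ S, H i ∈ W) →
      S.card ≤ d := by
  classical
  intro S hprop ⟨W, hW2, hWmem⟩
  by_contra hcard
  push_neg at hcard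
  have hcard' : d + 1 ≤ S.card := hcard
  -- two distinct elements of S
  have h2card : 1 < S.card := by omega
  obtain ⟨i₀, hi₀, i₁, hi₁, hne⟩ := Finset.one_lt_card.mp h2card
  set u := H i₀ with hu
  set v := H i₁ with hv
  have hu0 : u ≠ 0 := by
    intro h0
    exact hprop i₀ hi₀ i₁ hi₁ hne ⟨0, by rw [zero_smul]; exact hu.symm.trans h0⟩
  have hli : LinearIndependent ℂ ![u, v] := by
    rw [LinearIndependent.pair_iff' hu0]
    intro a ha
    exact hprop i₁ hi₁ i₀ hi₀ hne.symm ⟨a, ha.symm⟩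
  have hrange : Set.range ![u, v] = {u, v} := by
    ext x
    simp only [Set.mem_range, Set.mem_insert_iff, Set.mem_singleton_iff]
    constructor
    · rintro ⟨i, rfl⟩
      fin_cases i <;> simp
    · rintro (rfl | rfl)
      · exact ⟨0, rfl⟩
      · exact ⟨1, rfl⟩
  have hfr : Module.finrank ℂ (Submodule.span ℂ {u, v}) = 2 := by
    rw [← hrange, finrank_span_eq_card hli]
    simp
  haveI hfree : Module.Free ℂ W := Module.Free.of_divisionRing ℂ W
  haveI : Module.Finite ℂ W := Module.finite_of_finrank_pos (by rw [hW2]; norm_num)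
  have hle : Submodule.span ℂ {u, v} ≤ W := by
    rw [Submodule.span_le]
    intro x hx
    rcases hx with rfl | rfl
    · exact hWmem i₀ hi₀
    · exact hWmem i₁ hi₁
  have hspan_eq : Submodule.span ℂ {u, v} = W :=
    Submodule.eq_of_le_of_finrank_le hle (by rw [hW2, hfr])
  have hmem : ∀ i : {x // x ∈ S}, ∃ a b : ℂ, a • u + b • v = H i := by
    intro i
    have : H i ∈ Submodule.span ℂ {u, v} := by
      rw [hspan_eq]
      exact hWmem i i.2
    exact Submodule.mem_span_pair.mp this
  choose aa bb hab using hmem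
  obtain ⟨α, β, hbin⟩ := Stmt13Aux.binary_sum d hd u v S.attach aa bb
  have hSsum : ∑ i ∈ S, (H i) ^ d = ∑ m : Fin d, (α m • u + β m • v) ^ d := by
    rw [← Finset.sum_attach S (fun i => (H i) ^ d), ← hbin]
    exact Finset.sum_congr rfl fun i _ => by rw [hab i]
  -- the new decomposition
  set n₁ := Sᶜ.card with hn₁
  set e := (Sᶜ).equivFin with he
  set L : Fin (n₁ + d) → MvPolynomial (Fin N) ℂ :=
    Fin.append (fun j : Fin n₁ => H (e.symm j)) (fun m : Fin d => α m • u + β m • v) with hL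
  have hLhom : ∀ i, (L i).IsHomogeneous 1 := by
    intro i
    refine Fin.addCases (fun j => ?_) (fun m => ?_) i
    · rw [hL, Fin.append_left]
      exact hH1 _
    · rw [hL, Fin.append_right]
      exact Stmt13Aux.hom_comb (hH1 i₀) (hH1 i₁) _ _
  have hLsum : P = ∑ i, (L i) ^ d := by
    have hl : ∑ i : Fin (n₁ + d), L i ^ d
        = ∑ j : Fin n₁, (H (e.symm j)) ^ d + ∑ m : Fin d, (α m • u + β m • v) ^ d := by
      rw [Fin.sum_univ_add]
      congr 1
      · exact Finset.sum_congr rfl fun j _ => by rw [hL, Fin.append_left]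
      · exact Finset.sum_congr rfl fun m _ => by rw [hL, Fin.append_right]
    have hcompl : ∑ j : Fin n₁, (H (e.symm j)) ^ d = ∑ i ∈ Sᶜ, H i ^ d := by
      rw [Equiv.sum_comp e.symm (fun i : {x // x ∈ Sᶜ} => H (i : Fin t) ^ d)]
      exact Finset.sum_coe_sort Sᶜ (fun i => H i ^ d)
    rw [hdec, ← Finset.sum_add_sum_compl S (fun i => H i ^ d), hl, hcompl, hSsum]
    exact add_comm _ _
  have hmemS : (n₁ + d) ∈ {r : ℕ | ∃ L : Fin r → MvPolynomial (Fin N) ℂ,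
      (∀ i, (L i).IsHomogeneous 1) ∧ P = ∑ i, (L i) ^ d} := ⟨L, hLhom, hLsum⟩
  have hinf : waringRank d P ≤ n₁ + d := Nat.sInf_le hmemS
  rw [ht] at hinf
  have hscompl : n₁ = t - S.card := by
    rw [hn₁, Finset.card_compl, Fintype.card_fin]
  have hSle : S.card ≤ t := by
    have := Finset.card_le_univ S
    simpa using this
  omega
end

section
/- Let d > 1 and let F ∈ ℂ[x_0,x_1], G ∈ ℂ[y_0,y_1] be binary forms of degree d in disjoint pairs of variables with rk(F) = r and rk(G) = s, where s ≤ d − 1. Suppose F + G = H_1^d + ⋯ + H_t^d with t < r + s for linear forms H_i ∈ ℂ[x_0,x_1,y_0,y_1]. Then there is no 2-dimensional linear subspace W of the space of linear forms in x_0,x_1,y_0,y_1 such that W contains d pairwise non-proportional forms among the H_i and W has nonzero intersection with the span of y_0, y_1; equivalently, no line of ℙ^3 containing d of the points [H_i] meets the line ℙ(⟨y_0,y_1⟩). -/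
open MvPolynomial

/-- No 2-dimensional space of linear forms containing `d` pairwise non-proportional
summands `Hᵢ` can meet the span of the `y`-variables nontrivially. -/
theorem stmt14 (d r s t : ℕ) (hd : 1 < d)
    (F G : MvPolynomial (Fin 2) ℂ)
    (hF : F.IsHomogeneous d) (hG : G.IsHomogeneous d)
    (hr : waringRank d F = r) (hs : waringRank d G = s) (hsd : s ≤ d - 1)
    (H : Fin t → MvPolynomial (Fin 2 ⊕ Fin 2) ℂ)
    (hH1 : ∀ i, (H i).IsHomogeneous 1)
    (ht : t < r + s)
    (hsum : rename (Sum.inl : Fin 2 → Fin 2 ⊕ Fin 2) F +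
        rename (Sum.inr : Fin 2 → Fin 2 ⊕ Fin 2) G = ∑ i, (H i) ^ d) :
    ¬ ∃ W : Submodule ℂ (MvPolynomial (Fin 2 ⊕ Fin 2) ℂ),
        Module.finrank ℂ W = 2 ∧
        (∃ S : Finset (Fin t), S.card = d ∧
          (∀ i ∈ S, ∀ j ∈ S, i ≠ j → ¬ ∃ c : ℂ, H i = c • H j) ∧
          ∀ i ∈ S, H i ∈ W) ∧
        W ⊓ Submodule.span ℂ
            ({X (Sum.inr 0), X (Sum.inr 1)} : Set (MvPolynomial (Fin 2 ⊕ Fin 2) ℂ)) ≠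
          ⊥ := by
  classical
  rintro ⟨W, hW2, ⟨S, hScard, -, hSW⟩, hmeet⟩
  set ψ : MvPolynomial (Fin 2 ⊕ Fin 2) ℂ →ₐ[ℂ] MvPolynomial (Fin 2) ℂ :=
    aeval (Sum.elim X 0) with hψdef
  -- pick ℓ
  obtain ⟨ℓ, hℓmem, hℓ0⟩ := (Submodule.ne_bot_iff _).mp hmeet
  rw [Submodule.mem_inf] at hℓmem
  obtain ⟨hℓW, hℓy⟩ := hℓmem
  have hψX0 : ψ (X (Sum.inr 0)) = 0 := by simp [hψdef]
  have hψX1 : ψ (X (Sum.inr 1)) = 0 := by simp [hψdef]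
  have hψℓ : ψ ℓ = 0 := by
    obtain ⟨a, b, hab⟩ := Submodule.mem_span_pair.mp hℓy
    rw [← hab]
    simp [hψX0, hψX1]
  -- ψ preserves linear forms
  have hψhom : ∀ p : MvPolynomial (Fin 2 ⊕ Fin 2) ℂ, p.IsHomogeneous 1 →
      (ψ p).IsHomogeneous 1 := by
    intro p hp
    have := hp.aeval (n := 1)
      (Sum.elim X 0 : Fin 2 ⊕ Fin 2 → MvPolynomial (Fin 2) ℂ) (fun i => by
      cases i <;> simp [isHomogeneous_X, isHomogeneous_zero])
    simpa [hψdef] using this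
  -- F is the ψ-image of the decomposition
  have hF' : F = ∑ i, (ψ (H i)) ^ d := by
    have h1 : ψ (rename (Sum.inl : Fin 2 → Fin 2 ⊕ Fin 2) F) = F := by
      rw [hψdef, aeval_rename]
      simp [Function.comp_def]
    have h2 : ψ (rename (Sum.inr : Fin 2 → Fin 2 ⊕ Fin 2) G) = 0 := by
      rw [hψdef, aeval_rename]
      have : (Sum.elim (X : Fin 2 → MvPolynomial (Fin 2) ℂ) 0) ∘
          (Sum.inr : Fin 2 → Fin 2 ⊕ Fin 2) =
          (fun _ => (0 : MvPolynomial (Fin 2) ℂ)) := rfl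
      rw [this]
      have hc : constantCoeff G = 0 := by
        have := hG.coeff_eq_zero (d := 0) (by simp; omega)
        simpa [constantCoeff_eq] using this
      rw [aeval_zero', hc, map_zero]
    have := congrArg ψ hsum
    rw [map_add, h1, h2, add_zero, map_sum] at this
    simpa using this
  -- all ψ (H i), i ∈ S, are proportional to a single linear form M
  obtain ⟨M, hM1, hMc⟩ : ∃ M : MvPolynomial (Fin 2) ℂ, M.IsHomogeneous 1 ∧
      ∀ i ∈ S, ∃ c : ℂ, ψ (H i) = c • M := by
    by_cases hall : ∀ i ∈ S, ψ (H i) = 0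
    · exact ⟨0, isHomogeneous_zero _ _ _, fun i hi => ⟨0, by simp [hall i hi]⟩⟩
    · push_neg at hall
      obtain ⟨i0, hi0S, hi0⟩ := hall
      refine ⟨ψ (H i0), hψhom _ (hH1 i0), ?_⟩
      have hind : LinearIndependent ℂ ![H i0, ℓ] := by
        rw [linearIndependent_fin2]
        refine ⟨by simpa using hℓ0, fun a ha => ?_⟩
        apply hi0
        have := congrArg ψ ha.symm
        simpa [hψℓ] using this
      haveI : FiniteDimensional ℂ W :=
        FiniteDimensional.of_finrank_pos (by rw [hW2]; norm_num)
      have hle : Submodule.span ℂ (Set.range ![H i0, ℓ]) ≤ W := by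
        rw [Submodule.span_le]
        rintro x ⟨j, rfl⟩
        fin_cases j
        · exact hSW i0 hi0S
        · exact hℓW
      have hspan : Submodule.span ℂ (Set.range ![H i0, ℓ]) = W := by
        apply Submodule.eq_of_le_of_finrank_le hle
        rw [hW2, finrank_span_eq_card hind]
        simp
      have hrange : Set.range ![H i0, ℓ] = {H i0, ℓ} := by
        ext x
        simp [Fin.exists_fin_two]
        tauto
      intro i hi
      have hiW : H i ∈ Submodule.span ℂ ({H i0, ℓ} :
          Set (MvPolynomial (Fin 2 ⊕ Fin 2) ℂ)) := by
        rw [← hrange, hspan]; exact hSW i hi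
      obtain ⟨a, b, hab⟩ := Submodule.mem_span_pair.mp hiW
      refine ⟨a, ?_⟩
      have := congrArg ψ hab.symm
      simpa [hψℓ] using this
  -- coefficients
  set c : Fin t → ℂ := fun i => if h : i ∈ S then (hMc i h).choose else 0 with hc
  have hcspec : ∀ i ∈ S, ψ (H i) = c i • M := by
    intro i hi
    simp only [hc, dif_pos hi]
    exact (hMc i hi).choose_spec
  obtain ⟨b, hb⟩ := IsAlgClosed.exists_pow_nat_eq (∑ i ∈ S, (c i) ^ d) (by omega : 0 < d)
  -- the shorter decomposition
  set k := Sᶜ.card with hk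
  set e := Sᶜ.equivFin.symm with he
  set L : Fin (k + 1) → MvPolynomial (Fin 2) ℂ :=
    Fin.snoc (fun j => ψ (H (e j))) (b • M) with hL
  have hLhom : ∀ j, (L j).IsHomogeneous 1 := by
    intro j
    refine Fin.lastCases ?_ ?_ j
    · rw [hL]
      simp only [Fin.snoc_last]
      rw [smul_eq_C_mul]
      exact hM1.C_mul b
    · intro j
      rw [hL]
      simp only [Fin.snoc_castSucc]
      exact hψhom _ (hH1 _)
  have hFL : F = ∑ j, (L j) ^ d := by
    rw [Fin.sum_univ_castSucc]
    have h1 : ∀ j : Fin k, L j.castSucc = ψ (H (e j)) := fun j => by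
      rw [hL]; simp
    have h2 : L (Fin.last k) = b • M := by rw [hL]; simp
    have hcompl : ∑ j : Fin k, (ψ (H (e j))) ^ d = ∑ i ∈ Sᶜ, (ψ (H i)) ^ d := by
      rw [← Finset.sum_coe_sort Sᶜ (fun i => (ψ (H i)) ^ d)]
      exact Fintype.sum_equiv e _ _ (fun j => rfl)
    have hSsum : ∑ i ∈ S, (ψ (H i)) ^ d = (b • M) ^ d := by
      rw [smul_pow, hb, Finset.sum_smul]
      refine Finset.sum_congr rfl fun i hi => ?_
      rw [hcspec i hi, smul_pow]
    calc F = ∑ i, (ψ (H i)) ^ d := hF'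
      _ = ∑ i ∈ S, (ψ (H i)) ^ d + ∑ i ∈ Sᶜ, (ψ (H i)) ^ d :=
          (Finset.sum_add_sum_compl S _).symm
      _ = ∑ j : Fin k, (L j.castSucc) ^ d + (L (Fin.last k)) ^ d := by
          rw [h2, ← hSsum]
          have h1' : ∑ j : Fin k, (L j.castSucc) ^ d = ∑ i ∈ Sᶜ, (ψ (H i)) ^ d := by
            rw [← hcompl]
            exact Finset.sum_congr rfl fun j _ => by rw [h1]
          rw [h1']
          ring
  have hrle : r ≤ k + 1 := by
    rw [← hr]
    exact Nat.sInf_le ⟨L, hLhom, hFL⟩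
  have hkdt : k = t - d := by
    rw [hk, Finset.card_compl, hScard, Fintype.card_fin]
  have hdt : d ≤ t := by
    rw [← hScard]
    exact (Finset.card_le_univ S).trans_eq (Fintype.card_fin t)
  omega
end
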